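/- Let I_U ⊆ R_U be an ideal of the generalized fraction ring and I = I_U ∩ R its contraction. Then the map R/I → R_U/I_U is an isomorphism if and only if R_U/I_U is finitely generated as an R-module. -/

import Mathlib

open TensorProduct

attribute [local instance] Ideal.Quotient.field

lemma keyB (k A : Type) [Field k] [CommRing A] [Algebra k A] [Module.Finite k A]
    (h : ∀ a : A, (a ⊗ₜ[k] (1:A) : A ⊗[k] A) = 1 ⊗ₜ[k] a) :
    ∀ a : A, ∃ c : k, algebraMap k A c = a := by
  intro a
  have μ := LinearMap.mul' k A
  have htt : ∀ t : A ⊗[k] A, t = (LinearMap.mul' k A) t ⊗ₜ[k] (1:A) := by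
    intro t
    induction t with
    | zero => simp
    | tmul x y =>
        have h1 : (x ⊗ₜ[k] y : A ⊗[k] A)
            = LinearMap.rTensor A (LinearMap.mulLeft k x) (y ⊗ₜ[k] 1) := by
          rw [h y]; simp
        rw [h1]; simp
    | add t t' ht ht' =>
        rw [map_add, add_tmul]; exact congrArg₂ (· + ·) ht ht'
  have hbij : Function.Bijective (LinearMap.mul' k A) := by
    constructor
    · intro t t' htt'
      rw [htt t, htt t', htt']
    · intro x
      exact ⟨x ⊗ₜ[k] 1, by simp⟩
  have e : (A ⊗[k] A) ≃ₗ[k] A := LinearEquiv.ofBijective _ hbij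
  have hrank : Module.finrank k A * Module.finrank k A = Module.finrank k A := by
    rw [← Module.finrank_tensorProduct]
    exact e.finrank_eq
  by_cases h1 : (1 : A) = 0
  · exact ⟨0, by rw [map_zero]; rw [← mul_one a, h1, mul_zero]⟩
  · haveI : Nontrivial A := nontrivial_of_ne 1 0 h1
    have hpos : 0 < Module.finrank k A := Module.finrank_pos
    have hone : Module.finrank k A = 1 := by nlinarith
    obtain ⟨c, hc⟩ := (finrank_eq_one_iff_of_nonzero' (1:A) h1).mp hone a
    exact ⟨c, by rw [Algebra.algebraMap_eq_smul_one]; exact hc⟩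

lemma keyA (R B : Type) [CommRing R] [CommRing B] [Algebra R B] [Module.Finite R B]
    (h : ∀ b : B, (b ⊗ₜ[R] (1:B) : B ⊗[R] B) = 1 ⊗ₜ[R] b) :
    Function.Surjective (algebraMap R B) := by
  -- For every maximal ideal m, B = R·1 + m·B
  have hloc : ∀ m : Ideal R, m.IsMaximal → ∀ b : B,
      b ∈ LinearMap.range (Algebra.linearMap R B) ⊔ (m • ⊤ : Submodule R B) := by
    intro m hm b
    letI k := R ⧸ m
    letI J : Ideal B := m.map (algebraMap R B)
    letI Bb := B ⧸ J
    haveI : Module.Finite R Bb := Module.Finite.of_surjective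
      (Ideal.Quotient.mkₐ R J).toLinearMap Ideal.Quotient.mk_surjective
    haveI : Module.Finite k Bb := Module.Finite.of_restrictScalars_finite R k Bb
    -- the map B ⊗[R] B → Bb ⊗[k] Bb
    let mkl : B →ₗ[R] Bb := (Ideal.Quotient.mkₐ R J).toLinearMap
    let bil : B →ₗ[R] B →ₗ[R] (Bb ⊗[k] Bb) := LinearMap.mk₂ R
      (fun x y => (mkl x) ⊗ₜ[k] (mkl y))
      (fun x x' y => by rw [map_add, add_tmul])
      (fun r x y => by rw [map_smul, ← smul_tmul'])
      (fun x y y' => by rw [map_add, tmul_add])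
      (fun r x y => by
        rw [map_smul,
          show r • mkl y = (Ideal.Quotient.mk m r) • mkl y from
            (IsScalarTower.algebraMap_smul k r (mkl y)).symm,
          ← smul_tmul, smul_tmul',
          show (Ideal.Quotient.mk m r) • mkl x = r • mkl x from
            IsScalarTower.algebraMap_smul k r (mkl x),
          ← smul_tmul'])
    let φ : B ⊗[R] B →ₗ[R] (Bb ⊗[k] Bb) := TensorProduct.lift bil
    have hbar : ∀ x : Bb, (x ⊗ₜ[k] (1:Bb) : Bb ⊗[k] Bb) = 1 ⊗ₜ[k] x := by
      intro x
      obtain ⟨y, rfl⟩ := Ideal.Quotient.mk_surjective (I := J) x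
      have := congrArg φ (h y)
      simpa [φ, bil, mkl] using this
    obtain ⟨c, hc⟩ := keyB k Bb hbar (Ideal.Quotient.mk J b)
    obtain ⟨r, rfl⟩ := Ideal.Quotient.mk_surjective (I := m) c
    have : Ideal.Quotient.mk J b = Ideal.Quotient.mk J (algebraMap R B r) := by
      rw [← hc]; rfl
    have hmem : b - algebraMap R B r ∈ J := by
      rw [← Ideal.Quotient.eq_zero_iff_mem, map_sub, this, sub_self]
    refine Submodule.mem_sup.mpr ⟨algebraMap R B r, ⟨r, rfl⟩, b - algebraMap R B r, ?_, by ring⟩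
    rw [Ideal.smul_top_eq_map]
    exact hmem
  -- Nakayama
  intro b
  let N : Submodule R B := LinearMap.range (Algebra.linearMap R B)
  let C := B ⧸ N
  haveI : Module.Finite R C := Module.Finite.of_surjective N.mkQ (Submodule.mkQ_surjective N)
  have hC : ∀ m : Ideal R, m.IsMaximal → (⊤ : Submodule R C) ≤ m • ⊤ := by
    intro m hm c hc
    obtain ⟨x, rfl⟩ := Submodule.mkQ_surjective N c
    obtain ⟨u, hu, v, hv, huv⟩ := Submodule.mem_sup.mp (hloc m hm x)
    have hu0 : N.mkQ u = 0 := (Submodule.Quotient.mk_eq_zero N).mpr hu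
    have : N.mkQ x = N.mkQ v := by
      rw [← huv, map_add, hu0, zero_add]
    rw [this]
    have : N.mkQ v ∈ Submodule.map N.mkQ (m • ⊤) := Submodule.mem_map_of_mem hv
    rw [Submodule.map_smul''] at this
    exact Submodule.smul_mono le_rfl le_top this
  -- annihilator ideal
  let A : Ideal R := Module.annihilator R C
  have hA : A = ⊤ := by
    by_contra hne
    obtain ⟨m, hm, hAm⟩ := Ideal.exists_le_maximal A hne
    obtain ⟨r, hr1, hr0⟩ := Submodule.exists_sub_one_mem_and_smul_eq_zero_of_fg_of_le_smul
      m (⊤ : Submodule R C) (Module.Finite.fg_top (R := R) (M := C)) (hC m hm)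
    have hrA : r ∈ A := by
      rw [Module.mem_annihilator]
      intro c; exact hr0 c Submodule.mem_top
    have : (1 : R) ∈ m := by
      have := m.sub_mem (hAm hrA) hr1
      simpa using this
    exact hm.ne_top (Ideal.eq_top_of_isUnit_mem m this isUnit_one)
  have hCz : N.mkQ b = 0 := by
    have : (1:R) ∈ A := hA ▸ Submodule.mem_top
    rw [Module.mem_annihilator] at this
    have h1 := this (N.mkQ b)
    rwa [one_smul] at h1
  obtain ⟨r, hr⟩ := (Submodule.Quotient.mk_eq_zero N).mp hCz
  exact ⟨r, hr⟩

lemma keyC (R : Type) [CommRing R] {ι : Type} (L : ι → Type)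
    [∀ α, AddCommGroup (L α)] [∀ α, Module R (L α)] (s : ∀ α, L α)
    (Q : Type) [CommRing Q] [Algebra R Q]
    (hinv : ∀ α, Function.Bijective fun x : Q => (x ⊗ₜ[R] s α : Q ⊗[R] L α))
    (D : Type) [CommRing D] [Algebra R D] [Algebra Q D] [IsScalarTower R Q D] :
    ∀ α, Function.Bijective fun x : D => (x ⊗ₜ[R] s α : D ⊗[R] L α) := by
  intro α
  let mQ : Q →ₗ[Q] Q ⊗[R] L α :=
    { toFun := fun x => x ⊗ₜ[R] s α
      map_add' := fun x y => add_tmul x y (s α)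
      map_smul' := fun q x => by simp [TensorProduct.smul_tmul'] }
  let e : Q ≃ₗ[Q] Q ⊗[R] L α := LinearEquiv.ofBijective mQ (hinv α)
  let E : D ≃ₗ[Q] D ⊗[R] L α :=
    (TensorProduct.rid Q D).symm ≪≫ₗ (LinearEquiv.lTensor D e) ≪≫ₗ
      (TensorProduct.AlgebraTensorModule.cancelBaseChange R Q Q D (L α))
  have hE : ∀ x : D, E x = x ⊗ₜ[R] s α := by
    intro x
    show (TensorProduct.AlgebraTensorModule.cancelBaseChange R Q Q D (L α))
      ((LinearEquiv.lTensor D e) ((TensorProduct.rid Q D).symm x)) = x ⊗ₜ[R] s α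
    rw [TensorProduct.rid_symm_apply]
    have : (LinearEquiv.lTensor D e) (x ⊗ₜ[Q] (1:Q)) = x ⊗ₜ[Q] ((1:Q) ⊗ₜ[R] s α) := by
      simp [LinearEquiv.lTensor, e, mQ]
      rfl
    rw [this, TensorProduct.AlgebraTensorModule.cancelBaseChange_tmul, one_smul]
  have : (fun x : D => (x ⊗ₜ[R] s α : D ⊗[R] L α)) = E := by
    funext x; rw [hE x]
  rw [this]
  exact E.bijective

/-- An `R`-module `M` is invertible if the natural contraction `M ⊗[R] M^* → R` is bijective
(equivalently, `M` is finitely generated projective of rank one). -/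
def IsInvertibleModule (R M : Type) [CommRing R] [AddCommGroup M] [Module R M] : Prop :=
  Function.Bijective (contractRight (R := R) (M := M))

/-- An `R`-algebra `A` inverts a family of sections `s α` of modules `L α` if each map
`A → A ⊗[R] L α`, `x ↦ x ⊗ s α`, is bijective (i.e. each `1 ⊗ s α` is nowhere vanishing). -/
def Inverts (R : Type) [CommRing R] {ι : Type} (L : ι → Type)
    [∀ α, AddCommGroup (L α)] [∀ α, Module R (L α)] (s : ∀ α, L α)
    (A : Type) [CommRing A] [Algebra R A] : Prop :=
  ∀ α, Function.Bijective fun x : A => (x ⊗ₜ[R] s α : A ⊗[R] L α)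

/-- `Q` is a generalized fraction ring of `R` with respect to the family of sections
`s α ∈ L α` of invertible modules: `Q` inverts all the sections `s α`, and it is universal
among `R`-algebras doing so.  This is the universal property of the filtered colimit
`R_U = colim_{a ∈ ℕ·A} L^a` (Theorem 3.2 / Proposition 3.6 of the paper). -/
structure IsGenFractionRing (R : Type) [CommRing R] {ι : Type} (L : ι → Type)
    [∀ α, AddCommGroup (L α)] [∀ α, Module R (L α)] (s : ∀ α, L α)
    (Q : Type) [CommRing Q] [Algebra R Q] : Prop where
  inverts : Inverts R L s Q
  universal : ∀ (A : Type) [CommRing A] [Algebra R A],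
    Inverts R L s A → ∃! _ : Q →ₐ[R] A, True

/-- For an ideal `I_U ⊆ R_U` with contraction `I = I_U ∩ R`, the induced map
`R/I → R_U/I_U` is an isomorphism if and only if `R_U/I_U` is a finitely generated
`R`-module. -/
theorem stmt_15 (R : Type) [CommRing R] {ι : Type} (L : ι → Type)
    [∀ α, AddCommGroup (L α)] [∀ α, Module R (L α)]
    (hL : ∀ α, IsInvertibleModule R (L α)) (s : ∀ α, L α)
    (Q : Type) [CommRing Q] [Algebra R Q] (hQ : IsGenFractionRing R L s Q)
    (IU : Ideal Q) :
    Function.Bijective (Ideal.quotientMap IU (algebraMap R Q) le_rfl) ↔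
      Module.Finite R (Q ⧸ IU) := by
  classical
  -- Step 1: `R → Q` is an epimorphism: `q ⊗ 1 = 1 ⊗ q` in `Q ⊗[R] Q`.
  have hQQ : Inverts R L s (Q ⊗[R] Q) := keyC R L s Q hQ.inverts (Q ⊗[R] Q)
  obtain ⟨f, -, huniq⟩ := hQ.universal (Q ⊗[R] Q) hQQ
  have h1 : (Algebra.TensorProduct.includeLeft : Q →ₐ[R] Q ⊗[R] Q) = f :=
    huniq _ trivial
  have h2 : (Algebra.TensorProduct.includeRight : Q →ₐ[R] Q ⊗[R] Q) = f :=
    huniq _ trivial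
  have hrel : ∀ q : Q, (q ⊗ₜ[R] (1:Q) : Q ⊗[R] Q) = 1 ⊗ₜ[R] q := fun q => by
    have := AlgHom.congr_fun (h1.trans h2.symm) q
    simpa using this
  -- Step 2: push the relation to `B := Q ⧸ IU`.
  set B := Q ⧸ IU with hB
  have hrelB : ∀ b : B, (b ⊗ₜ[R] (1:B) : B ⊗[R] B) = 1 ⊗ₜ[R] b := by
    intro b
    obtain ⟨q, rfl⟩ := Ideal.Quotient.mk_surjective (I := IU) b
    let mk : Q →ₗ[R] B := (Ideal.Quotient.mkₐ R IU).toLinearMap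
    have := congrArg (TensorProduct.map mk mk) (hrel q)
    simpa [mk] using this
  have halg : ∀ r : R, algebraMap R B r = Ideal.Quotient.mk IU (algebraMap R Q r) :=
    fun r => rfl
  constructor
  · -- iso ⇒ finite
    intro hbij
    have hsurj : Function.Surjective (Algebra.linearMap R B) := by
      intro y
      obtain ⟨x, hx⟩ := hbij.2 y
      obtain ⟨r, rfl⟩ := Ideal.Quotient.mk_surjective x
      refine ⟨r, ?_⟩
      rw [Ideal.quotientMap_mk] at hx
      rw [Algebra.linearMap_apply, halg, hx]
    exact Module.Finite.of_surjective (Algebra.linearMap R B) hsurj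
  · -- finite ⇒ iso
    intro hfin
    refine ⟨Ideal.quotientMap_injective, ?_⟩
    intro y
    obtain ⟨r, hr⟩ := keyA R B hrelB y
    exact ⟨Ideal.Quotient.mk _ r, by rw [Ideal.quotientMap_mk, ← halg, hr]⟩
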